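/- arXiv:1507.07194 — 2 statements merged into one kernel-verified Lean document; each statement's English description precedes it below -/
import Mathlib

section
/- For every finite simple graph G, the independence number satisfies α(G) ≥ Σ_{v ∈ V(G)} 1/(ζ(v)+1), where ζ(v) is the degenerate degree of v. -/
open SimpleGraph Finset

/-- The minimum degree of a subgraph `H` of `G`: the infimum over vertices of `H`
of the number of neighbors in `H`. -/
noncomputable def subMinDeg {V : Type*} (G : SimpleGraph V) (H : G.Subgraph) : ℕ :=
  sInf ((fun v => (H.neighborSet v).ncard) '' H.verts)

/-- The degenerate degree `ζ(v)`: the maximum of `δ(H)` over all subgraphs `H` of `G`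
containing `v`. -/
noncomputable def zeta {V : Type*} (G : SimpleGraph V) (v : V) : ℕ :=
  sSup {n | ∃ H : G.Subgraph, v ∈ H.verts ∧ subMinDeg G H = n}

/-- A vertex `u` is cheap if `ζ(u) = deg_G(u)` and `ζ(u) ≤ ζ(w)` for every `w ∈ N[u]`. -/
def Cheap {V : Type*} (G : SimpleGraph V) (u : V) : Prop :=
  zeta G u = (G.neighborSet u).ncard ∧ ∀ w, G.Adj u w → zeta G u ≤ zeta G w

lemma zeta_set_nonempty {V : Type*} (G : SimpleGraph V) (v : V) :
    {n | ∃ H : G.Subgraph, v ∈ H.verts ∧ subMinDeg G H = n}.Nonempty := by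
  refine ⟨subMinDeg G (G.singletonSubgraph v), G.singletonSubgraph v, rfl, rfl⟩

lemma zeta_mem_le {V : Type*} [Fintype V] (G : SimpleGraph V) (v : V) {n : ℕ}
    (hn : n ∈ {n | ∃ H : G.Subgraph, v ∈ H.verts ∧ subMinDeg G H = n}) :
    n ≤ (G.neighborSet v).ncard := by
  obtain ⟨H, hv, rfl⟩ := hn
  have h1 : subMinDeg G H ≤ (H.neighborSet v).ncard := Nat.sInf_le ⟨v, hv, rfl⟩
  exact h1.trans (Set.ncard_le_ncard (H.neighborSet_subset v) (Set.toFinite _))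

lemma zeta_bddAbove {V : Type*} [Fintype V] (G : SimpleGraph V) (v : V) :
    BddAbove {n | ∃ H : G.Subgraph, v ∈ H.verts ∧ subMinDeg G H = n} :=
  ⟨(G.neighborSet v).ncard, fun _ hn => zeta_mem_le G v hn⟩

lemma zeta_le_deg {V : Type*} [Fintype V] (G : SimpleGraph V) (v : V) :
    zeta G v ≤ (G.neighborSet v).ncard :=
  csSup_le (zeta_set_nonempty G v) (fun _ hn => zeta_mem_le G v hn)

lemma le_zeta {V : Type*} [Fintype V] (G : SimpleGraph V) (H : G.Subgraph) {v : V}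
    (hv : v ∈ H.verts) : subMinDeg G H ≤ zeta G v :=
  le_csSup (zeta_bddAbove G v) ⟨H, hv, rfl⟩

lemma zeta_mono {V : Type*} [Fintype V] {G₁ G₂ : SimpleGraph V} (h : G₁ ≤ G₂) (v : V) :
    zeta G₁ v ≤ zeta G₂ v := by
  apply csSup_le (zeta_set_nonempty G₁ v)
  rintro n ⟨H, hv, rfl⟩
  let H' : G₂.Subgraph :=
    ⟨H.verts, H.Adj, fun hab => h (H.adj_sub hab), fun hab => H.edge_vert hab, H.symm⟩
  have heq : subMinDeg G₂ H' = subMinDeg G₁ H := rfl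
  exact heq ▸ le_zeta G₂ H' hv

/-- Restriction of `G` to a finset of vertices. -/
def restr {V : Type*} (G : SimpleGraph V) (s : Finset V) : SimpleGraph V where
  Adj u w := G.Adj u w ∧ u ∈ s ∧ w ∈ s
  symm := ⟨fun u w ⟨h, hu, hw⟩ => ⟨h.symm, hw, hu⟩⟩
  loopless := ⟨fun u ⟨h, _⟩ => G.loopless.irrefl u h⟩

lemma restr_le {V : Type*} (G : SimpleGraph V) {s t : Finset V} (h : s ⊆ t) :
    restr G s ≤ restr G t := fun _ _ ⟨ha, hu, hw⟩ => ⟨ha, h hu, h hw⟩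

lemma restr_univ {V : Type*} [Fintype V] (G : SimpleGraph V) : restr G univ = G := by
  ext u w
  simp [restr]

lemma key {V : Type*} [Fintype V] (G : SimpleGraph V) (s : Finset V) :
    ∃ t : Finset V, t ⊆ s ∧ (∀ u ∈ t, ∀ w ∈ t, u ≠ w → ¬ G.Adj u w) ∧
      (∑ v ∈ s, (1 : ℝ) / (zeta (restr G s) v + 1)) ≤ t.card := by
  classical
  induction s using Finset.strongInduction with
  | _ s ih =>
  rcases s.eq_empty_or_nonempty with rfl | hs
  · exact ⟨∅, Subset.rfl, by simp, by simp⟩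
  set Gs := restr G s with hGs
  -- the induced subgraph on s
  have edge_vert : ∀ {v w : V}, Gs.Adj v w → v ∈ (↑s : Set V) := fun h => h.2.1
  let Hs : Gs.Subgraph :=
    ⟨↑s, Gs.Adj, fun h => h, edge_vert, Gs.symm⟩
  have hHsnbr : ∀ v, Hs.neighborSet v = Gs.neighborSet v := fun _ => rfl
  -- choose u of minimum Gs-degree in s
  have hne : ((fun v => (Gs.neighborSet v).ncard) '' ↑s).Nonempty :=
    (hs.to_set).image _
  obtain ⟨u, hus, hu⟩ := Nat.sInf_mem hne
  set d : ℕ := (Gs.neighborSet u).ncard with hd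
  have hmin : subMinDeg Gs Hs = d := hu.symm
  have hzw : ∀ w ∈ s, (d : ℕ) ≤ zeta Gs w := by
    intro w hw
    have := le_zeta Gs Hs (v := w) (by exact hw)
    rwa [hmin] at this
  -- removed set
  have hfin : (Gs.neighborSet u).Finite := Set.toFinite _
  set Dn : Finset V := hfin.toFinset with hDn
  set D : Finset V := insert u Dn with hD
  have hDncard : Dn.card = d := (Set.ncard_eq_toFinset_card _ hfin).symm
  have hDcard : D.card ≤ d + 1 := by
    calc D.card ≤ Dn.card + 1 := Finset.card_insert_le _ _
    _ = d + 1 := by rw [hDncard]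
  set s' : Finset V := s \ D with hs'
  have hs'sub : s' ⊆ s := Finset.sdiff_subset
  have hss : s' ⊂ s := by
    refine Finset.ssubset_iff_of_subset hs'sub |>.mpr ⟨u, hus, ?_⟩
    simp [hs', hD]
  obtain ⟨t', ht's, ht'ind, ht'sum⟩ := ih s' hss
  have hut' : u ∉ t' := fun h => by
    have := ht's h
    rw [hs'] at this
    exact (Finset.mem_sdiff.mp this).2 (Finset.mem_insert_self _ _)
  refine ⟨insert u t', ?_, ?_, ?_⟩
  · intro x hx
    rcases Finset.mem_insert.mp hx with rfl | hx
    · exact hus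
    · exact hs'sub (ht's hx)
  · -- independence
    have hnadj : ∀ w ∈ t', ¬ G.Adj u w := by
      intro w hw hadj
      have hws' : w ∈ s' := ht's hw
      have hws : w ∈ s := hs'sub hws'
      have : Gs.Adj u w := ⟨hadj, hus, hws⟩
      have : w ∈ D := Finset.mem_insert_of_mem (hfin.mem_toFinset.mpr this)
      exact (Finset.mem_sdiff.mp (ht's hw)).2 this
    intro x hx y hy hxy hadj
    rcases Finset.mem_insert.mp hx with hxu | hx' <;>
      rcases Finset.mem_insert.mp hy with hyu | hy'
    · exact hxy (hxu.trans hyu.symm)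
    · exact hnadj y hy' (hxu ▸ hadj)
    · exact hnadj x hx' (hyu ▸ hadj.symm)
    · exact ht'ind x hx' y hy' hxy hadj
  · -- the sum bound
    have hcard : (insert u t').card = t'.card + 1 := Finset.card_insert_of_notMem hut'
    have hsplit : ∑ v ∈ s ∩ D, (1 : ℝ) / (zeta Gs v + 1)
        + ∑ v ∈ s \ D, (1 : ℝ) / (zeta Gs v + 1)
        = ∑ v ∈ s, (1 : ℝ) / (zeta Gs v + 1) := Finset.sum_inter_add_sum_sdiff s D _
    have hdpos : (0 : ℝ) < (d : ℝ) + 1 := by positivity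
    have hterm : ∀ v ∈ s ∩ D, (1 : ℝ) / (zeta Gs v + 1) ≤ 1 / ((d : ℝ) + 1) := by
      intro v hv
      have hvz : (d : ℕ) ≤ zeta Gs v := hzw v (Finset.mem_inter.mp hv).1
      apply one_div_le_one_div_of_le hdpos
      have : (d : ℝ) ≤ (zeta Gs v : ℝ) := by exact_mod_cast hvz
      linarith
    have h1 : ∑ v ∈ s ∩ D, (1 : ℝ) / (zeta Gs v + 1) ≤ 1 := by
      calc ∑ v ∈ s ∩ D, (1 : ℝ) / (zeta Gs v + 1)
          ≤ (s ∩ D).card • (1 / ((d : ℝ) + 1)) := Finset.sum_le_card_nsmul _ _ _ hterm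
        _ = ((s ∩ D).card : ℝ) * (1 / ((d : ℝ) + 1)) := by
            rw [nsmul_eq_mul]
        _ ≤ ((d : ℝ) + 1) * (1 / ((d : ℝ) + 1)) := by
            apply mul_le_mul_of_nonneg_right _ (by positivity)
            have : (s ∩ D).card ≤ d + 1 :=
              le_trans (Finset.card_le_card (Finset.inter_subset_right)) hDcard
            exact_mod_cast this
        _ = 1 := mul_one_div_cancel (ne_of_gt hdpos)
    have h2 : ∑ v ∈ s \ D, (1 : ℝ) / (zeta Gs v + 1) ≤ (t'.card : ℝ) := by
      refine le_trans (Finset.sum_le_sum ?_) ht'sum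
      intro v hv
      have hmono : zeta (restr G s') v ≤ zeta Gs v :=
        zeta_mono (restr_le G hs'sub) v
      apply one_div_le_one_div_of_le
      · positivity
      · have : ((zeta (restr G s') v : ℝ)) ≤ (zeta Gs v : ℝ) := by exact_mod_cast hmono
        linarith
    rw [← hsplit, hcard]
    push_cast
    linarith

theorem stmt_5 {V : Type*} [Fintype V] (G : SimpleGraph V) :
    ∃ s : Finset V, (∀ u ∈ s, ∀ w ∈ s, u ≠ w → ¬ G.Adj u w) ∧
      (∑ v : V, (1 : ℝ) / (zeta G v + 1)) ≤ s.card := by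
  obtain ⟨t, _, hind, hsum⟩ := key G Finset.univ
  refine ⟨t, hind, ?_⟩
  rwa [restr_univ] at hsum
end

section
/- For every finite simple graph G on n ≥ 1 vertices, α(G) ≥ n/(ζ̄ + 1), where ζ̄ = (Σ_{v} ζ(v))/n is the average degenerate degree. -/
open SimpleGraph Finset

/-- `ζ` relativized to subgraphs with vertex set inside `A`. -/
noncomputable def zetaIn {V : Type*} (G : SimpleGraph V) (A : Set V) (v : V) : ℕ :=
  sSup {n | ∃ H : G.Subgraph, H.verts ⊆ A ∧ v ∈ H.verts ∧ subMinDeg G H = n}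

lemma subMinDeg_le_ncard {V : Type*} (G : SimpleGraph V) (H : G.Subgraph) {v : V}
    (hv : v ∈ H.verts) : subMinDeg G H ≤ (H.neighborSet v).ncard :=
  Nat.sInf_le ⟨v, hv, rfl⟩

lemma zetaIn_bddAbove {V : Type*} [Fintype V] (G : SimpleGraph V) (A : Set V) (v : V) :
    BddAbove {n | ∃ H : G.Subgraph, H.verts ⊆ A ∧ v ∈ H.verts ∧ subMinDeg G H = n} := by
  refine ⟨Fintype.card V, ?_⟩
  rintro n ⟨H, -, hv, rfl⟩
  calc subMinDeg G H ≤ (H.neighborSet v).ncard := subMinDeg_le_ncard G H hv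
    _ ≤ (Set.univ : Set V).ncard := Set.ncard_le_ncard (Set.subset_univ _) (Set.toFinite _)
    _ = Fintype.card V := by rw [Set.ncard_univ, Nat.card_eq_fintype_card]

lemma zetaIn_set_nonempty {V : Type*} (G : SimpleGraph V) {A : Set V} {v : V} (hv : v ∈ A) :
    Set.Nonempty {n | ∃ H : G.Subgraph, H.verts ⊆ A ∧ v ∈ H.verts ∧ subMinDeg G H = n} :=
  ⟨subMinDeg G (G.singletonSubgraph v), G.singletonSubgraph v,
    by rw [singletonSubgraph_verts]; simpa using hv,
    by rw [singletonSubgraph_verts]; exact rfl, rfl⟩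

lemma zetaIn_mono {V : Type*} [Fintype V] (G : SimpleGraph V) {A B : Set V} (hAB : A ⊆ B)
    {v : V} (hv : v ∈ A) : zetaIn G A v ≤ zetaIn G B v :=
  csSup_le_csSup (zetaIn_bddAbove G B v) (zetaIn_set_nonempty G hv)
    (fun _ ⟨H, hs, hv', he⟩ => ⟨H, hs.trans hAB, hv', he⟩)

lemma zetaIn_univ {V : Type*} (G : SimpleGraph V) (v : V) :
    zetaIn G Set.univ v = zeta G v := by
  unfold zetaIn zeta
  congr 1
  ext n
  simp [Set.subset_univ]

lemma main_ind {V : Type*} [Fintype V] (G : SimpleGraph V) (A : Finset V) :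
    ∃ s : Finset V, s ⊆ A ∧ (∀ x ∈ s, ∀ y ∈ s, ¬ G.Adj x y) ∧
      ∑ v ∈ A, (1:ℝ)/(zetaIn G ↑A v + 1) ≤ s.card := by
  classical
  induction A using Finset.strongInduction with
  | _ A ih =>
    rcases A.eq_empty_or_nonempty with rfl | hA
    · exact ⟨∅, by simp, by simp, by simp⟩
    obtain ⟨u, huA, hmin⟩ :=
      A.exists_min_image (fun v => ({w ∈ (↑A : Set V) | G.Adj v w}).ncard) hA
    set dA : V → ℕ := fun v => ({w ∈ (↑A : Set V) | G.Adj v w}).ncard with hdA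
    set δ := dA u with hδ
    set HA : G.Subgraph := (⊤ : G.Subgraph).induce ↑A with hHA
    have hHAverts : HA.verts = ↑A := rfl
    have hNA : ∀ v ∈ A, HA.neighborSet v = {w ∈ (↑A : Set V) | G.Adj v w} := by
      intro v hv
      ext w
      simp [hHA, SimpleGraph.Subgraph.neighborSet, SimpleGraph.Subgraph.induce_adj, hv,
        and_comm]
    have hmem : δ ∈ (fun v => (HA.neighborSet v).ncard) '' HA.verts :=
      ⟨u, by simpa [hHAverts] using huA, by
        show (HA.neighborSet u).ncard = δ
        rw [hNA u huA]⟩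
    have hsub1 : subMinDeg G HA ≤ δ := Nat.sInf_le hmem
    have hsub2 : δ ≤ subMinDeg G HA := by
      have hne : ((fun v => (HA.neighborSet v).ncard) '' HA.verts).Nonempty := ⟨_, hmem⟩
      obtain ⟨w, hw, hwe⟩ := Nat.sInf_mem hne
      have hwA : w ∈ A := by simpa [hHAverts] using hw
      calc δ ≤ dA w := hmin w hwA
        _ = (HA.neighborSet w).ncard := by rw [hNA w hwA]
        _ = subMinDeg G HA := hwe
    have hlow : ∀ v ∈ A, δ ≤ zetaIn G ↑A v := by
      intro v hv
      have h1 : subMinDeg G HA ≤ zetaIn G ↑A v :=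
        le_csSup (zetaIn_bddAbove G ↑A v)
          ⟨HA, by rw [hHAverts], by simpa [hHAverts] using hv, rfl⟩
      omega
    set C : Finset V := A.filter (fun v => v = u ∨ G.Adj u v) with hC
    set B : Finset V := A \ C with hB
    have hCA : C ⊆ A := filter_subset _ _
    have huC : u ∈ C := mem_filter.2 ⟨huA, Or.inl rfl⟩
    have hδeq : δ = (A.filter (fun v => G.Adj u v)).card := by
      have h1 : ({w ∈ (↑A : Set V) | G.Adj u w}) = ↑(A.filter (fun v => G.Adj u v)) := by
        ext w; simp [and_comm]
      show ({w ∈ (↑A : Set V) | G.Adj u w}).ncard = _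
      rw [h1, Set.ncard_coe_finset]
    have hCcard : C.card = δ + 1 := by
      have hCeq : C = insert u (A.filter (fun v => G.Adj u v)) := by
        ext v
        simp only [hC, mem_filter, mem_insert]
        constructor
        · rintro ⟨hvA, h | h⟩
          · exact Or.inl h
          · exact Or.inr ⟨hvA, h⟩
        · rintro (rfl | ⟨hvA, h⟩)
          · exact ⟨huA, Or.inl rfl⟩
          · exact ⟨hvA, Or.inr h⟩
      rw [hCeq, card_insert_of_notMem (by simp [G.irrefl]), ← hδeq]
    have hterm : ∀ v ∈ C, (1:ℝ)/(zetaIn G ↑A v + 1) ≤ 1/((δ:ℝ)+1) := by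
      intro v hv
      have h1 : (δ:ℝ) ≤ (zetaIn G ↑A v : ℝ) := Nat.cast_le.2 (hlow v (hCA hv))
      exact one_div_le_one_div_of_le (by positivity) (by linarith)
    have hCsum : ∑ v ∈ C, (1:ℝ)/(zetaIn G ↑A v + 1) ≤ 1 := by
      calc ∑ v ∈ C, (1:ℝ)/(zetaIn G ↑A v + 1) ≤ C.card • ((1:ℝ)/((δ:ℝ)+1)) :=
            Finset.sum_le_card_nsmul _ _ _ hterm
        _ = ((δ:ℝ)+1) * (1/((δ:ℝ)+1)) := by rw [hCcard, nsmul_eq_mul]; push_cast; ring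
        _ = 1 := by field_simp
    have hBA : B ⊂ A := by
      refine Finset.ssubset_iff_of_subset Finset.sdiff_subset |>.2 ⟨u, huA, ?_⟩
      simp [hB, huC]
    obtain ⟨s', hs'B, hs'ind, hs'sum⟩ := ih B hBA
    have hBsub : (↑B : Set V) ⊆ ↑A := Finset.coe_subset.2 Finset.sdiff_subset
    have hBsum : ∑ v ∈ B, (1:ℝ)/(zetaIn G ↑A v + 1) ≤ ∑ v ∈ B, (1:ℝ)/(zetaIn G ↑B v + 1) := by
      apply Finset.sum_le_sum
      intro v hv
      have h1 : zetaIn G ↑B v ≤ zetaIn G ↑A v :=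
        zetaIn_mono G hBsub (Finset.mem_coe.2 hv)
      exact one_div_le_one_div_of_le (by positivity) (by exact_mod_cast Nat.add_le_add_right h1 1)
    have hu' : u ∉ s' := fun h => (Finset.mem_sdiff.1 (hs'B h)).2 huC
    refine ⟨insert u s', ?_, ?_, ?_⟩
    · intro x hx
      rcases mem_insert.1 hx with rfl | hx
      · exact huA
      · exact Finset.sdiff_subset (hs'B hx)
    · have hnadj : ∀ y ∈ s', ¬ G.Adj u y := by
        intro y hy hadj
        exact (Finset.mem_sdiff.1 (hs'B hy)).2
          (mem_filter.2 ⟨(Finset.mem_sdiff.1 (hs'B hy)).1, Or.inr hadj⟩)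
      intro x hx y hy
      rcases mem_insert.1 hx with hx' | hx' <;> rcases mem_insert.1 hy with hy' | hy'
      · rw [hx', hy']; exact G.irrefl
      · rw [hx']; exact hnadj y hy'
      · rw [hy']; intro h; exact hnadj x hx' h.symm
      · exact hs'ind x hx' y hy'
    · rw [card_insert_of_notMem hu']
      have hsplit : ∑ v ∈ B, (1:ℝ)/(zetaIn G ↑A v + 1) + ∑ v ∈ C, (1:ℝ)/(zetaIn G ↑A v + 1)
          = ∑ v ∈ A, (1:ℝ)/(zetaIn G ↑A v + 1) := Finset.sum_sdiff hCA
      push_cast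
      linarith

theorem stmt_8 {V : Type*} [Fintype V] [Nonempty V] (G : SimpleGraph V) :
    ∃ s : Finset V, (∀ u ∈ s, ∀ w ∈ s, u ≠ w → ¬ G.Adj u w) ∧
      (Fintype.card V : ℝ) /
        ((∑ v : V, (zeta G v : ℝ)) / (Fintype.card V) + 1) ≤ s.card := by
  classical
  obtain ⟨s, hsub, hind, hsum⟩ := main_ind G Finset.univ
  refine ⟨s, fun u hu w hw _ => hind u hu w hw, ?_⟩
  have hsum' : ∑ v : V, (1:ℝ)/((zeta G v : ℝ) + 1) ≤ s.card := by
    have h0 := hsum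
    simp only [Finset.coe_univ, zetaIn_univ] at h0
    exact h0
  set n : ℝ := (Fintype.card V : ℝ) with hn'
  have hn : 0 < n := by
    rw [hn']
    exact_mod_cast Fintype.card_pos
  set Z : ℝ := ∑ v : V, (zeta G v : ℝ) with hZ'
  have hZ : 0 ≤ Z := Finset.sum_nonneg (fun v _ => by positivity)
  set T : ℝ := ∑ v : V, (1:ℝ)/((zeta G v : ℝ) + 1) with hT'
  have hcs : n^2 ≤ (Z + n) * T := by
    have h := Finset.sum_mul_sq_le_sq_mul_sq Finset.univ
      (fun v => Real.sqrt ((zeta G v : ℝ) + 1))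
      (fun v => (Real.sqrt ((zeta G v : ℝ) + 1))⁻¹)
    have h1 : ∀ v : V, Real.sqrt ((zeta G v : ℝ) + 1) *
        (Real.sqrt ((zeta G v : ℝ) + 1))⁻¹ = 1 := fun v =>
      mul_inv_cancel₀ (by positivity)
    have h2 : ∀ v : V, Real.sqrt ((zeta G v : ℝ) + 1) ^ 2 = (zeta G v : ℝ) + 1 := fun v =>
      Real.sq_sqrt (by positivity)
    have h3 : ∀ v : V, ((Real.sqrt ((zeta G v : ℝ) + 1))⁻¹) ^ 2 = 1/((zeta G v : ℝ) + 1) := by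
      intro v
      rw [inv_pow, h2, one_div]
    calc n^2 = (∑ v : V, Real.sqrt ((zeta G v : ℝ) + 1) *
          (Real.sqrt ((zeta G v : ℝ) + 1))⁻¹) ^ 2 := by
          simp only [h1]
          simp [hn']
      _ ≤ (∑ v : V, Real.sqrt ((zeta G v : ℝ) + 1) ^ 2) *
          (∑ v : V, ((Real.sqrt ((zeta G v : ℝ) + 1))⁻¹) ^ 2) := h
      _ = (Z + n) * T := by
          simp only [h2, h3]
          rw [hT', hZ', hn', Finset.sum_add_distrib]
          simp
  have hden : 0 < Z/n + 1 := by
    have := div_nonneg hZ hn.le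
    linarith
  have hZn : 0 < Z + n := by linarith
  have heq : Z/n + 1 = (Z + n)/n := by field_simp
  rw [heq, div_div_eq_mul_div, div_le_iff₀ hZn]
  have h4 : (Z + n) * T ≤ (Z + n) * s.card :=
    mul_le_mul_of_nonneg_left hsum' hZn.le
  nlinarith [hcs, h4]
end
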